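/- arXiv:2012.13879 — 6 statements merged into one kernel-verified Lean document; each statement's English description precedes it below -/
import Mathlib

section
/- For every twice-differentiable function f : (0,∞) → ℝ and every y > 0, the factorization H = A*A holds: A*(A f)(y) = −f''(y) − f'(y)/y + V(y)·f(y)/y² = (H f)(y). Moreover the potential satisfies the identities V(y) = y·Z'(y) + Z(y)² and V(y)/y² = 1/y² − 2(1+Z(y))² for all y > 0. -/
noncomputable section

/-- `Z(y) = (1-y²)/(1+y²)`. -/
def Zf (y : ℝ) : ℝ := (1 - y ^ 2) / (1 + y ^ 2)

/-- The potential `V(y) = (y⁴-6y²+1)/(1+y²)²`. -/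
def Vf (y : ℝ) : ℝ := (y ^ 4 - 6 * y ^ 2 + 1) / (1 + y ^ 2) ^ 2

/-- The linearized Hamiltonian `H f = -f'' - f'/y + V f / y²`. -/
def Hop (f : ℝ → ℝ) (y : ℝ) : ℝ :=
  -(deriv (deriv f) y) - deriv f y / y + Vf y * f y / y ^ 2

/-- The first order factor `A f = -f' + (Z/y) f`. -/
def Aop (f : ℝ → ℝ) (y : ℝ) : ℝ := -deriv f y + Zf y / y * f y

/-- The adjoint factor `A* f = f' + ((1+Z)/y) f`. -/
def Astar (f : ℝ → ℝ) (y : ℝ) : ℝ := deriv f y + (1 + Zf y) / y * f y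

lemma denom_ne (y : ℝ) : (1 + y ^ 2) ≠ 0 := by positivity

lemma Zf_hasDeriv (y : ℝ) : HasDerivAt Zf (-4 * y / (1 + y ^ 2) ^ 2) y := by
  have h1 : HasDerivAt (fun t : ℝ => 1 - t ^ 2) (-(2 * y)) y := by
    simpa using ((hasDerivAt_pow 2 y).const_sub 1)
  have h2 : HasDerivAt (fun t : ℝ => 1 + t ^ 2) (2 * y) y := by
    simpa using ((hasDerivAt_pow 2 y).const_add 1)
  have : HasDerivAt Zf ((-(2 * y) * (1 + y ^ 2) - (1 - y ^ 2) * (2 * y)) / (1 + y ^ 2) ^ 2) y :=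
    h1.div h2 (denom_ne y)
  convert this using 1
  ring

lemma Zf_deriv (y : ℝ) : deriv Zf y = -4 * y / (1 + y ^ 2) ^ 2 :=
  (Zf_hasDeriv y).deriv

/-- The factorization `H = A* A` together with the potential identities
`V = y Z' + Z²` and `V/y² = 1/y² - 2(1+Z)²`. -/
theorem H_factorization (f : ℝ → ℝ)
    (hf : ∀ y > (0 : ℝ), DifferentiableAt ℝ f y)
    (hf' : ∀ y > (0 : ℝ), DifferentiableAt ℝ (deriv f) y) :
    (∀ y > (0 : ℝ),
      Astar (fun t => Aop f t) y
        = -(deriv (deriv f) y) - deriv f y / y + Vf y * f y / y ^ 2 ∧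
      Astar (fun t => Aop f t) y = Hop f y) ∧
    (∀ y > (0 : ℝ), Vf y = y * deriv Zf y + (Zf y) ^ 2) ∧
    (∀ y > (0 : ℝ), Vf y / y ^ 2 = 1 / y ^ 2 - 2 * (1 + Zf y) ^ 2) := by
  refine ⟨?_, ?_, ?_⟩
  · intro y hy
    have hy0 : y ≠ 0 := ne_of_gt hy
    -- derivative of Aop f at y
    have hA : HasDerivAt (fun t => Aop f t)
        (-(deriv (deriv f) y)
          + (((-4 * y / (1 + y ^ 2) ^ 2) * y - Zf y * 1) / y ^ 2 * f y
             + Zf y / y * deriv f y)) y := by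
      have h1 : HasDerivAt (fun t => -deriv f t) (-(deriv (deriv f) y)) y :=
        ((hf' y hy).hasDerivAt).neg
      have h2 : HasDerivAt (fun t => Zf t / t)
          (((-4 * y / (1 + y ^ 2) ^ 2) * y - Zf y * 1) / y ^ 2) y :=
        (Zf_hasDeriv y).div (hasDerivAt_id y) hy0
      have h3 := h2.mul ((hf y hy).hasDerivAt)
      exact h1.add h3
    have hmain : Astar (fun t => Aop f t) y
        = -(deriv (deriv f) y) - deriv f y / y + Vf y * f y / y ^ 2 := by
      rw [Astar, hA.deriv, Aop, Zf, Vf]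
      field_simp
      ring
    exact ⟨hmain, by rw [hmain]; rfl⟩
  · intro y hy
    rw [Zf_deriv, Zf, Vf]
    field_simp
    ring
  · intro y hy
    have hy0 : y ≠ 0 := ne_of_gt hy
    rw [Zf, Vf]
    field_simp
    ring

end
end

section
/- The functions Λφ(y) = 2y/(1+y²) and Γ(y) = (1/(4(1+y²)))·(y³ + 4y·log y − 1/y) satisfy: (i) H(Λφ) = 0 on (0,∞); (ii) H(Γ) = 0 on (0,∞); (iii) the Wronskian identity Λφ'(y)·Γ(y) − Γ'(y)·Λφ(y) = −1/y for all y > 0. -/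
noncomputable section

/-- The resonance `Λφ(y) = 2y/(1+y²)`. -/
def Lphi (y : ℝ) : ℝ := 2 * y / (1 + y ^ 2)

/-- The second element `Γ` of the kernel of `H`. -/
def Gam (y : ℝ) : ℝ :=
  (1 / (4 * (1 + y ^ 2))) * (y ^ 3 + 4 * y * Real.log y - 1 / y)

/-- First derivative of `Λφ`. -/
def L1 (y : ℝ) : ℝ := (2 - 2 * y ^ 2) / (1 + y ^ 2) ^ 2

/-- Second derivative of `Λφ`. -/
def L2 (y : ℝ) : ℝ := (4 * y ^ 3 - 12 * y) / (1 + y ^ 2) ^ 3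

/-- First derivative of `Γ` (on `(0,∞)`). -/
def G1 (y : ℝ) : ℝ :=
  (y ^ 4 + 7 * y ^ 2 + 7 + 1 / y ^ 2 + (4 - 4 * y ^ 2) * Real.log y) /
    (4 * (1 + y ^ 2) ^ 2)

/-- Second derivative of `Γ` (on `(0,∞)`). -/
def G2 (y : ℝ) : ℝ :=
  ((4 * y ^ 3 + 14 * y - 2 / y ^ 3 - 8 * y * Real.log y + (4 - 4 * y ^ 2) / y) *
      (4 * (1 + y ^ 2) ^ 2) -
    (y ^ 4 + 7 * y ^ 2 + 7 + 1 / y ^ 2 + (4 - 4 * y ^ 2) * Real.log y) *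
      (16 * y * (1 + y ^ 2))) / (4 * (1 + y ^ 2) ^ 2) ^ 2

lemma one_add_sq_ne (y : ℝ) : 1 + y ^ 2 ≠ 0 := by positivity

lemma hasDerivAt_Lphi (y : ℝ) : HasDerivAt Lphi (L1 y) y := by
  have h := ((hasDerivAt_id y).const_mul 2).div
    ((hasDerivAt_const y 1).add (hasDerivAt_pow 2 y)) (one_add_sq_ne y)
  refine h.congr_deriv (Eq.symm ?_)
  have h1 := one_add_sq_ne y
  simp only [id, Pi.add_apply, Pi.sub_apply, Pi.mul_apply, Pi.div_apply, Pi.pow_apply, L1]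
  field_simp [L1]
  ring

lemma hasDerivAt_L1 (y : ℝ) : HasDerivAt L1 (L2 y) y := by
  have h := ((hasDerivAt_const y 2).sub ((hasDerivAt_pow 2 y).const_mul 2)).div
    (((hasDerivAt_const y 1).add (hasDerivAt_pow 2 y)).pow 2)
    (pow_ne_zero 2 (one_add_sq_ne y))
  refine h.congr_deriv (Eq.symm ?_)
  have h1 := one_add_sq_ne y
  simp only [id, Pi.add_apply, Pi.sub_apply, Pi.mul_apply, Pi.div_apply, Pi.pow_apply, L2]
  field_simp [L2]
  ring

lemma deriv_Lphi : deriv Lphi = L1 := funext fun y => (hasDerivAt_Lphi y).deriv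

lemma hasDerivAt_Gam {y : ℝ} (hy : 0 < y) : HasDerivAt Gam (G1 y) y := by
  have hP := ((hasDerivAt_pow 3 y).add
      (((hasDerivAt_id y).const_mul 4).mul (Real.hasDerivAt_log hy.ne'))).sub
    ((hasDerivAt_const y 1).div (hasDerivAt_id y) hy.ne')
  have hQ := (hasDerivAt_const y 1).div
    (((hasDerivAt_const y 1).add (hasDerivAt_pow 2 y)).const_mul 4)
    (show 4 * (1 + y ^ 2) ≠ 0 by positivity)
  have h := hQ.mul hP
  refine h.congr_deriv (Eq.symm ?_)
  have h1 := one_add_sq_ne y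
  have hy0 := hy.ne'
  simp only [id, Pi.add_apply, Pi.sub_apply, Pi.mul_apply, Pi.div_apply, Pi.pow_apply]
  unfold G1
  field_simp
  ring

lemma deriv_Gam_eq {y : ℝ} (hy : 0 < y) : deriv Gam y = G1 y :=
  (hasDerivAt_Gam hy).deriv

lemma deriv_Gam_eventually {y : ℝ} (hy : 0 < y) :
    deriv Gam =ᶠ[nhds y] G1 := by
  filter_upwards [IsOpen.mem_nhds isOpen_Ioi hy] with x hx
  exact deriv_Gam_eq hx

lemma hasDerivAt_G1 {y : ℝ} (hy : 0 < y) : HasDerivAt G1 (G2 y) y := by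
  have hy2 : (y : ℝ) ^ 2 ≠ 0 := by positivity
  have h := (((((hasDerivAt_pow 4 y).add ((hasDerivAt_pow 2 y).const_mul 7)).add
        (hasDerivAt_const y 7)).add
        ((hasDerivAt_const y 1).div (hasDerivAt_pow 2 y) hy2)).add
        (((hasDerivAt_const y 4).sub ((hasDerivAt_pow 2 y).const_mul 4)).mul
          (Real.hasDerivAt_log hy.ne'))).div
    ((((hasDerivAt_const y 1).add (hasDerivAt_pow 2 y)).pow 2).const_mul 4)
    (show 4 * (1 + y ^ 2) ^ 2 ≠ 0 by positivity)
  refine h.congr_deriv (Eq.symm ?_)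
  have h1 := one_add_sq_ne y
  have hy0 := hy.ne'
  simp only [id, Pi.add_apply, Pi.sub_apply, Pi.mul_apply, Pi.div_apply, Pi.pow_apply, G2]
  field_simp [G2]
  ring

/-- `Λφ` and `Γ` span the kernel of `H` on `(0,∞)`, with Wronskian `-1/y`. -/
theorem kernel_of_H :
    (∀ y > (0 : ℝ), Hop Lphi y = 0) ∧
    (∀ y > (0 : ℝ), Hop Gam y = 0) ∧
    (∀ y > (0 : ℝ), deriv Lphi y * Gam y - deriv Gam y * Lphi y = -(1 / y)) := by
  refine ⟨fun y hy => ?_, fun y hy => ?_, fun y hy => ?_⟩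
  · have h2 : deriv (deriv Lphi) y = L2 y := by
      rw [deriv_Lphi]; exact (hasDerivAt_L1 y).deriv
    unfold Hop
    rw [h2, deriv_Lphi]
    unfold Vf Lphi L1 L2
    have h1 := one_add_sq_ne y
    field_simp
    ring
  · have h2 : deriv (deriv Gam) y = G2 y := by
      rw [Filter.EventuallyEq.deriv_eq (deriv_Gam_eventually hy)]
      exact (hasDerivAt_G1 hy).deriv
    unfold Hop
    rw [h2, deriv_Gam_eq hy]
    unfold Vf Gam G1 G2
    have h1 := one_add_sq_ne y
    have hy0 := hy.ne'
    field_simp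
    ring
  · rw [deriv_Lphi, deriv_Gam_eq hy]
    unfold L1 G1 Lphi Gam
    have h1 := one_add_sq_ne y
    have hy0 := hy.ne'
    field_simp
    ring

end
end

section
/- For every y > 0 one has the strict inequalities 0 < 2·log(1+y²) − 2y²/(1+y²) < y²/2. Consequently there exists a constant d₁ ∈ (0,1) such that for all y > 0, 0 ≤ 2·log(1+y²)/y² − 2/(1+y²) ≤ (1−d₁)/2. -/
open Real Set

lemma key_deriv_aux (t : ℝ) (ht : (0:ℝ) ≤ t) :
    HasDerivAt (fun x : ℝ => x*(6+x)/(6+4*x) - Real.log (1+x))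
      (((1*(6+t)+t*1)*(6+4*t) - (t*(6+t))*(4*1))/(6+4*t)^2 - (0+1)/(1+t)) t := by
  have h1 : HasDerivAt (fun x : ℝ => x*(6+x)) (1*(6+t) + t*1) t :=
    (hasDerivAt_id t).mul ((hasDerivAt_id t).const_add 6)
  have h2 : HasDerivAt (fun x : ℝ => 6+4*x) (4*1) t :=
    ((hasDerivAt_id t).const_mul 4).const_add 6
  have hne : (6+4*t) ≠ 0 := by nlinarith
  have h1t : (1:ℝ)+t ≠ 0 := by nlinarith
  have h4 : HasDerivAt (fun x : ℝ => Real.log (1+x)) ((0+1)/(1+t)) t := by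
    have hin : HasDerivAt (fun x : ℝ => 1+x) (0+1) t :=
      (hasDerivAt_const t 1).add (hasDerivAt_id t)
    have := (Real.hasDerivAt_log h1t).comp t hin
    simpa [div_eq_inv_mul, Function.comp_def] using this
  exact (h1.div h2 hne).sub h4

lemma key_pade (t : ℝ) (ht : (0:ℝ) ≤ t) : Real.log (1+t) ≤ t*(6+t)/(6+4*t) := by
  have key : MonotoneOn (fun x : ℝ => x*(6+x)/(6+4*x) - Real.log (1+x)) (Ici 0) := by
    apply monotoneOn_of_deriv_nonneg (convex_Ici 0)
    · intro x hx
      exact (key_deriv_aux x hx).continuousAt.continuousWithinAt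
    · intro x hx
      rw [interior_Ici] at hx
      exact (key_deriv_aux x hx.le).differentiableAt.differentiableWithinAt
    · intro x hx
      rw [interior_Ici] at hx
      have hx' : (0:ℝ) < x := hx
      rw [(key_deriv_aux x hx'.le).deriv]
      have h1 : (0:ℝ) < 1 + x := by linarith
      have h2 : (0:ℝ) < (6+4*x)^2 := by positivity
      rw [sub_nonneg, div_le_div_iff₀ h1 h2]
      nlinarith [mul_pos (mul_pos hx' hx') hx']
  have h0 := key (self_mem_Ici) (mem_Ici.mpr ht) ht
  simp only [Real.log_one, zero_mul, mul_zero, add_zero] at h0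
  norm_num at h0
  linarith

lemma key_main (t : ℝ) (ht : 0 < t) :
    2*Real.log (1+t) - 2*t/(1+t) ≤ 9/20 * t := by
  have h1t : (0:ℝ) < 1 + t := by linarith
  set s := Real.sqrt (1+t) - 1 with hs_def
  have hs1 : 1 + s = Real.sqrt (1+t) := by ring
  have hsq : (1+s)^2 = 1+t := by rw [hs1, Real.sq_sqrt h1t.le]
  have hs_pos : 0 < s := by
    have h : (1:ℝ) < Real.sqrt (1+t) := by
      have := Real.sqrt_lt_sqrt (by norm_num : (0:ℝ) ≤ 1) (by linarith : (1:ℝ) < 1+t)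
      simpa using this
    simp only [hs_def]; linarith
  have hlog : Real.log (1+t) = 2 * Real.log (1+s) := by
    rw [← hsq, show ((1+s)^2 : ℝ) = (1+s)^(2:ℕ) by norm_num, Real.log_pow]
    push_cast; ring
  have ht_eq : t = s^2 + 2*s := by nlinarith
  have hp := key_pade s hs_pos.le
  rw [hlog, ht_eq]
  have hden1 : (0:ℝ) < 6+4*s := by linarith
  have hden2 : (0:ℝ) < 1 + (s^2+2*s) := by nlinarith
  have step : 2*(2*Real.log (1+s)) - 2*(s^2+2*s)/(1+(s^2+2*s))
      ≤ 4*(s*(6+s)/(6+4*s)) - 2*(s^2+2*s)/(1+(s^2+2*s)) := by linarith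
  refine step.trans ?_
  rw [show 4*(s*(6+s)/(6+4*s)) = (4*(s*(6+s)))/(6+4*s) by ring]
  rw [div_sub_div _ _ hden1.ne' hden2.ne', div_le_iff₀ (by positivity), mul_comm 4 _]
  nlinarith [sq_nonneg (s - 3/4), mul_pos hs_pos hs_pos, sq_nonneg s,
    mul_nonneg (mul_nonneg hs_pos.le hs_pos.le) (sq_nonneg (s-3/4)),
    mul_nonneg hs_pos.le (sq_nonneg (s-3/4)),
    mul_nonneg (mul_nonneg (mul_nonneg hs_pos.le hs_pos.le) hs_pos.le) hs_pos.le]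

lemma key_lower (t : ℝ) (ht : 0 < t) : t/(1+t) < Real.log (1+t) := by
  have h1 : (0:ℝ) < 1+t := by linarith
  have h2 := Real.log_lt_sub_one_of_pos (x := (1+t)⁻¹) (by positivity)
    (by
      intro h
      have : (1:ℝ)+t = 1 := by
        field_simp at h; linarith
      linarith)
  rw [Real.log_inv] at h2
  have h3 : (1+t)⁻¹ - 1 = -(t/(1+t)) := by field_simp; ring
  linarith [h3 ▸ h2]

/-- The key pointwise bound behind the gain-of-two-derivatives lemma:
`0 < 2 log(1+y²) - 2y²/(1+y²) < y²/2` on `(0,∞)`; consequently there is a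
constant `d₁ ∈ (0,1)` with `0 ≤ 2 log(1+y²)/y² - 2/(1+y²) ≤ (1-d₁)/2`. -/
theorem key_pointwise_bound :
    (∀ y > (0 : ℝ),
      0 < 2 * Real.log (1 + y ^ 2) - 2 * y ^ 2 / (1 + y ^ 2) ∧
      2 * Real.log (1 + y ^ 2) - 2 * y ^ 2 / (1 + y ^ 2) < y ^ 2 / 2) ∧
    ∃ d₁ ∈ Set.Ioo (0 : ℝ) 1, ∀ y > (0 : ℝ),
      0 ≤ 2 * Real.log (1 + y ^ 2) / y ^ 2 - 2 / (1 + y ^ 2) ∧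
      2 * Real.log (1 + y ^ 2) / y ^ 2 - 2 / (1 + y ^ 2) ≤ (1 - d₁) / 2 := by
  have hmain : ∀ y > (0:ℝ),
      0 < 2 * Real.log (1 + y ^ 2) - 2 * y ^ 2 / (1 + y ^ 2) ∧
      2 * Real.log (1 + y ^ 2) - 2 * y ^ 2 / (1 + y ^ 2) ≤ 9/20 * y ^ 2 := by
    intro y hy
    have ht : (0:ℝ) < y ^ 2 := by positivity
    constructor
    · have := key_lower (y ^ 2) ht
      have h1 : (0:ℝ) < 1 + y ^ 2 := by linarith
      have h2 : 2 * y ^ 2 / (1 + y ^ 2) = 2 * (y ^ 2 / (1 + y ^ 2)) := by ring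
      rw [h2]; linarith
    · have := key_main (y ^ 2) ht
      have h2 : 2 * (y ^ 2) / (1 + y ^ 2) = 2 * y ^ 2 / (1 + y ^ 2) := by ring
      linarith [h2 ▸ this]
  constructor
  · intro y hy
    obtain ⟨h1, h2⟩ := hmain y hy
    have ht : (0:ℝ) < y ^ 2 := by positivity
    exact ⟨h1, lt_of_le_of_lt h2 (by nlinarith)⟩
  · refine ⟨1/10, ⟨by norm_num, by norm_num⟩, fun y hy => ?_⟩
    obtain ⟨h1, h2⟩ := hmain y hy
    have ht : (0:ℝ) < y ^ 2 := by positivity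
    have h1t : (0:ℝ) < 1 + y ^ 2 := by linarith
    have key : 2 * Real.log (1 + y ^ 2) / y ^ 2 - 2 / (1 + y ^ 2)
        = (2 * Real.log (1 + y ^ 2) - 2 * y ^ 2 / (1 + y ^ 2)) / y ^ 2 := by
      field_simp
    rw [key]
    constructor
    · positivity
    · rw [div_le_iff₀ ht]
      have : (1 - 1/10) / 2 * y ^ 2 = 9/20 * y ^ 2 := by ring
      linarith [this ▸ h2]
end

section
/- Set L(y) = Z'(y) and G(y) = V'(y)/y for y > 0. Then: (i) L(y) = −4y/(1+y²)² and G(y) = 16(y²−1)/(1+y²)³; (ii) for every differentiable function f : (0,∞) → ℝ and every y > 0, A*(L·f)(y) + L(y)·(A f)(y) = G(y)·f(y). -/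
noncomputable section

/-- `L(y) = Z'(y)`. -/
def Lf (y : ℝ) : ℝ := deriv Zf y

/-- `G(y) = V'(y)/y`. -/
def Gf (y : ℝ) : ℝ := deriv Vf y / y

lemma hden (y : ℝ) : (1 : ℝ) + y ^ 2 ≠ 0 := by positivity

lemma Lf_eq : Lf = fun y : ℝ => -4 * y / (1 + y ^ 2) ^ 2 :=
  funext fun y => (Zf_hasDeriv y).deriv

lemma Vf_hasDeriv (y : ℝ) :
    HasDerivAt Vf ((16 * y ^ 3 - 16 * y) / (1 + y ^ 2) ^ 3) y := by
  have hnum : HasDerivAt (fun t : ℝ => t ^ 4 - 6 * t ^ 2 + 1)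
      (4 * y ^ 3 - 6 * (2 * y)) y := by
    have := ((hasDerivAt_pow 4 y).sub ((hasDerivAt_pow 2 y).const_mul 6)).add_const 1
    refine this.congr_deriv ?_
    push_cast; ring
  have hd : HasDerivAt (fun t : ℝ => (1 + t ^ 2) ^ 2)
      (2 * (1 + y ^ 2) * (2 * y)) y := by
    have := ((hasDerivAt_pow 2 y).const_add 1).pow 2
    refine this.congr_deriv ?_
    push_cast; ring
  have h := hnum.div hd (pow_ne_zero 2 (hden y))
  refine h.congr_deriv ?_
  have h1 : (1 : ℝ) + y ^ 2 ≠ 0 := hden y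
  field_simp
  ring

lemma Lf_hasDeriv (y : ℝ) :
    HasDerivAt Lf ((12 * y ^ 2 - 4) / (1 + y ^ 2) ^ 3) y := by
  rw [Lf_eq]
  have hd : HasDerivAt (fun t : ℝ => (1 + t ^ 2) ^ 2)
      (2 * (1 + y ^ 2) * (2 * y)) y := by
    have := ((hasDerivAt_pow 2 y).const_add 1).pow 2
    refine this.congr_deriv ?_
    push_cast; ring
  have hnum : HasDerivAt (fun t : ℝ => -4 * t) (-4 : ℝ) y := by
    simpa using (hasDerivAt_id y).const_mul (-4 : ℝ)
  have h := hnum.div hd (pow_ne_zero 2 (hden y))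
  refine h.congr_deriv ?_
  have h1 : (1 : ℝ) + y ^ 2 ≠ 0 := hden y
  field_simp
  ring

/-- Explicit formulas for `L, G` and the structural identity
`A*(L f) + L (A f) = G f`. -/
theorem LG_structure :
    (∀ y > (0 : ℝ),
      Lf y = -4 * y / (1 + y ^ 2) ^ 2 ∧
      Gf y = 16 * (y ^ 2 - 1) / (1 + y ^ 2) ^ 3) ∧
    (∀ f : ℝ → ℝ, (∀ y > (0 : ℝ), DifferentiableAt ℝ f y) →
      ∀ y > (0 : ℝ),
        Astar (fun t => Lf t * f t) y + Lf y * Aop f y = Gf y * f y) := by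
  have hG : ∀ y : ℝ, y ≠ 0 → Gf y = 16 * (y ^ 2 - 1) / (1 + y ^ 2) ^ 3 := by
    intro y hy
    rw [Gf, (Vf_hasDeriv y).deriv]
    field_simp
  constructor
  · intro y hy
    exact ⟨by rw [Lf_eq], hG y (ne_of_gt hy)⟩
  · intro f hf y hy
    have hy0 : y ≠ 0 := ne_of_gt hy
    have hfd := hf y hy
    have hprod : HasDerivAt (fun t => Lf t * f t)
        ((12 * y ^ 2 - 4) / (1 + y ^ 2) ^ 3 * f y + Lf y * deriv f y) y :=
      (Lf_hasDeriv y).mul hfd.hasDerivAt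
    rw [Astar, Aop, hprod.deriv, hG y hy0, Lf_eq, Zf]
    have h1 : (1 : ℝ) + y ^ 2 ≠ 0 := hden y
    field_simp
    ring
end
end

section
/- Let C ≥ 0, s₀ > 1, and b* ∈ (0,1) with C/|log b*| ≤ 1/2. Suppose b : [s₀,∞) → (0, b*) is C¹ and satisfies |b'(s) + b(s)²| ≤ C·b(s)²/|log b(s)| for all s ≥ s₀. Then s·b(s) → 1 as s → ∞; more precisely, there exist S ≥ s₀ and C' > 0 such that |b(s) − 1/s| ≤ C'/(s·log s) for all s ≥ S. -/
open Filter Topology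

set_option maxHeartbeats 2000000 in
private lemma b_modulation_key (C : ℝ) (hC : 0 ≤ C) (s₀ : ℝ) (hs₀ : 1 < s₀)
    (bstar : ℝ) (hbstar : bstar ∈ Set.Ioo (0 : ℝ) 1)
    (hCbstar : C / |Real.log bstar| ≤ 1 / 2)
    (b : ℝ → ℝ)
    (hrange : ∀ s ≥ s₀, b s ∈ Set.Ioo 0 bstar)
    (hC1 : ContDiffOn ℝ 1 b (Set.Ici s₀))
    (hODE : ∀ s ≥ s₀,
      |derivWithin b (Set.Ici s₀) s + (b s) ^ 2|
        ≤ C * (b s) ^ 2 / |Real.log (b s)|) :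
    ∃ S ≥ max s₀ 2, ∃ C' > (0 : ℝ), ∀ s ≥ S,
      |b s - 1 / s| ≤ C' / (s * Real.log s) := by
  obtain ⟨hbs0, hbs1⟩ := hbstar
  set u : ℝ → ℝ := fun s => (b s)⁻¹ with hu
  set d : ℝ → ℝ := fun s => derivWithin b (Set.Ici s₀) s with hd
  have hbpos : ∀ s ≥ s₀, 0 < b s := fun s hs => (hrange s hs).1
  have hblt : ∀ s ≥ s₀, b s < bstar := fun s hs => (hrange s hs).2
  have hb1 : ∀ s ≥ s₀, b s < 1 := fun s hs => (hblt s hs).trans hbs1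
  have hupos : ∀ s ≥ s₀, 0 < u s := fun s hs => inv_pos.2 (hbpos s hs)
  have hu1 : ∀ s ≥ s₀, 1 < u s := fun s hs =>
    (one_lt_inv₀ (hbpos s hs)).2 (hb1 s hs)
  -- |log (b s)| = log (u s) and it is ≥ |log bstar| > 0
  have hlogu : ∀ s ≥ s₀, |Real.log (b s)| = Real.log (u s) := by
    intro s hs
    rw [hu, Real.log_inv, abs_of_neg (Real.log_neg (hbpos s hs) (hb1 s hs))]
  have hlbstar : 0 < |Real.log bstar| := by
    rw [abs_of_neg (Real.log_neg hbs0 hbs1)]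
    linarith [Real.log_neg hbs0 hbs1]
  have hlogub : ∀ s ≥ s₀, |Real.log bstar| ≤ Real.log (u s) := by
    intro s hs
    rw [← hlogu s hs, abs_of_neg (Real.log_neg (hbpos s hs) (hb1 s hs)),
      abs_of_neg (Real.log_neg hbs0 hbs1)]
    have := Real.log_le_log (hbpos s hs) (le_of_lt (hblt s hs))
    linarith
  have hlogupos : ∀ s ≥ s₀, 0 < Real.log (u s) := fun s hs =>
    lt_of_lt_of_le hlbstar (hlogub s hs)
  -- rewritten ODE
  have hODE' : ∀ s ≥ s₀, |d s + b s ^ 2| ≤ C * b s ^ 2 / Real.log (u s) := by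
    intro s hs
    have := hODE s hs
    rwa [hlogu s hs] at this
  -- derivative of u
  have hderivu : ∀ s ∈ Set.Ici s₀, HasDerivWithinAt u (-(d s) / b s ^ 2) (Set.Ici s₀) s := by
    intro s hs
    have hb : HasDerivWithinAt b (d s) (Set.Ici s₀) s :=
      ((hC1.differentiableOn one_ne_zero) s hs).hasDerivWithinAt
    exact hb.inv (ne_of_gt (hbpos s hs))
  -- bound on |u' - 1| by C / log u
  have hud : ∀ s ≥ s₀, |(-(d s) / b s ^ 2) - 1| ≤ C / Real.log (u s) := by
    intro s hs
    have hb2 : (0:ℝ) < b s ^ 2 := pow_pos (hbpos s hs) 2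
    have heq : (-(d s) / b s ^ 2) - 1 = -((d s + b s ^ 2) / b s ^ 2) := by
      field_simp
      rw [add_div, div_self hb2.ne']; ring
    rw [heq, abs_neg, abs_div, abs_of_pos hb2]
    calc |d s + b s ^ 2| / b s ^ 2
        ≤ (C * b s ^ 2 / Real.log (u s)) / b s ^ 2 := by
          gcongr
          exact hODE' s hs
      _ = C / Real.log (u s) := by
          rw [div_div, mul_comm (Real.log (u s)) (b s ^ 2),
            mul_comm C (b s ^ 2), mul_div_mul_left _ _ hb2.ne']
  -- bound by 1/2
  have hud2 : ∀ s ≥ s₀, |(-(d s) / b s ^ 2) - 1| ≤ 1 / 2 := by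
    intro s hs
    refine (hud s hs).trans ?_
    calc C / Real.log (u s) ≤ C / |Real.log bstar| := by
          gcongr
          exact hlogub s hs
      _ ≤ 1 / 2 := hCbstar
  -- MVT: growth of u
  have hgrow : ∀ s ≥ s₀, |(u s - s) - (u s₀ - s₀)| ≤ (1/2) * |s - s₀| := by
    intro s hs
    have := Convex.norm_image_sub_le_of_norm_hasDerivWithin_le
      (f := fun t => u t - t) (f' := fun t => (-(d t) / b t ^ 2) - 1)
      (s := Set.Ici s₀) (C := 1/2)
      (fun x hx => ((hderivu x hx).sub (hasDerivWithinAt_id x _)))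
      (fun x hx => by simpa using hud2 x hx)
      (convex_Ici s₀) Set.self_mem_Ici hs
    simpa [Real.norm_eq_abs] using this
  have hulb : ∀ s ≥ s₀, u s₀ + (s - s₀) / 2 ≤ u s := by
    intro s hs
    have h1 := hgrow s hs
    rw [abs_of_nonneg (by linarith : (0:ℝ) ≤ s - s₀)] at h1
    have := abs_le.1 h1
    linarith [this.1]
  -- the threshold S₁
  set S₁ : ℝ := max (4 * s₀) 16 with hS₁
  have hS₁16 : (16:ℝ) ≤ S₁ := le_max_right _ _
  have hS₁4s : 4 * s₀ ≤ S₁ := le_max_left _ _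
  have hS₁s₀ : s₀ ≤ S₁ := by
    have : s₀ ≤ 4 * s₀ := by linarith
    linarith
  have hsub : Set.Ici S₁ ⊆ Set.Ici s₀ := Set.Ici_subset_Ici.2 hS₁s₀
  -- log 16 ≥ 2
  have hexp2 : Real.exp 2 ≤ 16 := by
    have h1 := Real.exp_one_lt_d9
    have h2 : Real.exp 2 = Real.exp 1 * Real.exp 1 := by
      rw [← Real.exp_add]; norm_num
    nlinarith [Real.exp_pos 1]
  have hlogS : ∀ t ≥ S₁, 2 ≤ Real.log t := by
    intro t ht
    have h16 : (16:ℝ) ≤ t := le_trans hS₁16 ht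
    have : Real.exp 2 ≤ t := le_trans hexp2 h16
    calc (2:ℝ) = Real.log (Real.exp 2) := (Real.log_exp 2).symm
      _ ≤ Real.log t := Real.log_le_log (Real.exp_pos 2) this
  have htpos : ∀ t ≥ S₁, (0:ℝ) < t := fun t ht => lt_of_lt_of_le (by norm_num) (le_trans hS₁16 ht)
  -- u t ≥ t/4 and u t ≥ √t for t ≥ S₁
  have huq : ∀ t ≥ S₁, t / 4 ≤ u t := by
    intro t ht
    have h1 := hulb t (le_trans hS₁s₀ ht)
    have h2 := hu1 s₀ le_rfl
    have h3 : 4 * s₀ ≤ t := le_trans hS₁4s ht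
    linarith
  have husqrt : ∀ t ≥ S₁, Real.sqrt t ≤ u t := by
    intro t ht
    have h16 : (16:ℝ) ≤ t := le_trans hS₁16 ht
    have hsq : Real.sqrt t ^ 2 = t := Real.sq_sqrt (by linarith)
    have hsn : 0 ≤ Real.sqrt t := Real.sqrt_nonneg t
    have h4 : 4 ≤ Real.sqrt t := by nlinarith
    have : Real.sqrt t ≤ t / 4 := by nlinarith
    exact this.trans (huq t ht)
  have hloguS : ∀ t ≥ S₁, Real.log t / 2 ≤ Real.log (u t) := by
    intro t ht
    have h1 : Real.log (Real.sqrt t) ≤ Real.log (u t) :=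
      Real.log_le_log (Real.sqrt_pos.2 (htpos t ht)) (husqrt t ht)
    rwa [Real.log_sqrt (le_of_lt (htpos t ht))] at h1
  -- derivative of the comparison function  h t = K * (t / log t)
  set K : ℝ := 4 * C + 1 with hK
  have hKpos : 0 < K := by positivity
  have hh' : ∀ t ≥ S₁, HasDerivAt (fun t => K * (t / Real.log t))
      (K * ((Real.log t - 1) / (Real.log t) ^ 2)) t := by
    intro t ht
    have hlt : Real.log t ≠ 0 := by
      have := hlogS t ht; linarith
    have htne : t ≠ 0 := (htpos t ht).ne'
    have h1 : HasDerivAt Real.log t⁻¹ t := Real.hasDerivAt_log htne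
    have h2 : HasDerivAt (fun t => t / Real.log t)
        ((1 * Real.log t - t * t⁻¹) / (Real.log t) ^ 2) t :=
      (hasDerivAt_id t).div h1 hlt
    have h3 : (1 * Real.log t - t * t⁻¹) = Real.log t - 1 := by
      field_simp
    rw [h3] at h2
    exact h2.const_mul K
  -- derivative bound:  |u' - 1| ≤ h'
  have hkey : ∀ t ≥ S₁, |(-(d t) / b t ^ 2) - 1|
      ≤ K * ((Real.log t - 1) / (Real.log t) ^ 2) := by
    intro t ht
    have hL := hlogS t ht
    have hLu := hloguS t ht
    have hLupos : (0:ℝ) < Real.log (u t) := by linarith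
    have h1 : |(-(d t) / b t ^ 2) - 1| ≤ C / Real.log (u t) := hud t (le_trans hS₁s₀ ht)
    have h2 : C / Real.log (u t) ≤ C / (Real.log t / 2) := by
      gcongr
    have h3 : C / (Real.log t / 2) = 2 * C / Real.log t := by
      rw [div_div_eq_mul_div]
      ring_nf
    have h4 : 2 * C / Real.log t ≤ K * ((Real.log t - 1) / (Real.log t) ^ 2) := by
      have hLpos : (0:ℝ) < Real.log t := by linarith
      have hLp : (0:ℝ) < Real.log t ^ 2 := by positivity
      have heq2 : K * ((Real.log t - 1) / (Real.log t) ^ 2)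
          = K * (Real.log t - 1) / Real.log t ^ 2 := by ring
      rw [heq2, div_le_div_iff₀ hLpos hLp, hK]
      nlinarith [mul_nonneg (mul_nonneg hC
          (by linarith : (0:ℝ) ≤ Real.log t - 2)) hLpos.le,
        mul_nonneg (by linarith : (0:ℝ) ≤ Real.log t - 1) hLpos.le]
    calc |(-(d t) / b t ^ 2) - 1| ≤ C / Real.log (u t) := h1
      _ ≤ C / (Real.log t / 2) := h2
      _ = 2 * C / Real.log t := h3
      _ ≤ K * ((Real.log t - 1) / (Real.log t) ^ 2) := h4
  -- monotone comparison on [S₁, ∞)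
  have hcontu : ContinuousOn u (Set.Ici S₁) := fun t ht =>
    ((hderivu t (hsub ht)).continuousWithinAt).mono hsub
  have hconth : ContinuousOn (fun t => K * (t / Real.log t)) (Set.Ici S₁) := fun t ht =>
    ((hh' t ht).continuousAt).continuousWithinAt
  have hint : interior (Set.Ici S₁) = Set.Ioi S₁ := interior_Ici
  have hmono : ∀ t₁ ∈ Set.Ici S₁, ∀ t₂ ∈ Set.Ici S₁, t₁ ≤ t₂ →
      |(u t₂ - t₂) - (u t₁ - t₁)|
        ≤ K * (t₂ / Real.log t₂) - K * (t₁ / Real.log t₁) := by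
    have hplus : MonotoneOn (fun t => K * (t / Real.log t) - (u t - t)) (Set.Ici S₁) := by
      apply monotoneOn_of_hasDerivWithinAt_nonneg (convex_Ici S₁)
        (hconth.sub (hcontu.sub continuousOn_id))
        (f' := fun t => K * ((Real.log t - 1) / (Real.log t) ^ 2) - ((-(d t) / b t ^ 2) - 1))
      · intro x hx
        rw [hint] at hx
        have hx' : x ∈ Set.Ici S₁ := Set.mem_Ici.2 (le_of_lt (Set.mem_Ioi.1 hx))
        rw [hint]
        exact ((hh' x hx').hasDerivWithinAt).sub
          (((hderivu x (hsub hx')).mono (Set.Ioi_subset_Ici_self.trans hsub)).sub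
            (hasDerivWithinAt_id x _))
      · intro x hx
        rw [hint] at hx
        have := hkey x (le_of_lt hx)
        have := abs_le.1 this
        linarith [this.2]
    have hminus : MonotoneOn (fun t => K * (t / Real.log t) + (u t - t)) (Set.Ici S₁) := by
      apply monotoneOn_of_hasDerivWithinAt_nonneg (convex_Ici S₁)
        (hconth.add (hcontu.sub continuousOn_id))
        (f' := fun t => K * ((Real.log t - 1) / (Real.log t) ^ 2) + ((-(d t) / b t ^ 2) - 1))
      · intro x hx
        rw [hint] at hx
        have hx' : x ∈ Set.Ici S₁ := Set.mem_Ici.2 (le_of_lt (Set.mem_Ioi.1 hx))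
        rw [hint]
        exact ((hh' x hx').hasDerivWithinAt).add
          (((hderivu x (hsub hx')).mono (Set.Ioi_subset_Ici_self.trans hsub)).sub
            (hasDerivWithinAt_id x _))
      · intro x hx
        rw [hint] at hx
        have := hkey x (le_of_lt hx)
        have := abs_le.1 this
        linarith [this.1]
    intro t₁ ht₁ t₂ ht₂ h12
    have h1 := hplus ht₁ ht₂ h12
    have h2 := hminus ht₁ ht₂ h12
    simp only at h1 h2
    rw [abs_le]
    constructor <;> linarith
  -- absorb the constant
  set A : ℝ := |u S₁ - S₁| with hA
  have hAnn : 0 ≤ A := abs_nonneg _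
  set S₂ : ℝ := max S₁ ((2 * A + 2) ^ 2) with hS₂
  have hS₂S₁ : S₁ ≤ S₂ := le_max_left _ _
  have hfinal : ∀ s ≥ S₂, |u s - s| ≤ (K + 1) * (s / Real.log s) := by
    intro s hs
    have hsS₁ : S₁ ≤ s := le_trans hS₂S₁ hs
    have hspos : 0 < s := htpos s hsS₁
    have hLs : 2 ≤ Real.log s := hlogS s hsS₁
    have h1 := hmono S₁ Set.self_mem_Ici s hsS₁ hsS₁
    have hS₁pos : 0 < S₁ := htpos S₁ le_rfl
    have hhS₁pos : 0 < K * (S₁ / Real.log S₁) := by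
      have := hlogS S₁ le_rfl
      positivity
    have h2 : |u s - s| ≤ K * (s / Real.log s) + A := by
      have h1' := abs_le.1 h1
      have hA2 : -A ≤ u S₁ - S₁ ∧ u S₁ - S₁ ≤ A := abs_le.1 hA.ge
      rw [abs_le]
      constructor <;> linarith [h1'.1, h1'.2, hA2.1, hA2.2]
    -- A ≤ s / log s
    have hsqA : (2 * A + 2) ≤ Real.sqrt s := by
      have h3 : (2 * A + 2) ^ 2 ≤ s := le_trans (le_max_right _ _) hs
      calc 2 * A + 2 = Real.sqrt ((2 * A + 2) ^ 2) :=
            (Real.sqrt_sq (by positivity)).symm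
        _ ≤ Real.sqrt s := Real.sqrt_le_sqrt h3
    have hlogsq : Real.log s ≤ 2 * Real.sqrt s := by
      have h4 : Real.log s = 2 * Real.log (Real.sqrt s) := by
        rw [Real.log_sqrt hspos.le]; ring
      have h5 : Real.log (Real.sqrt s) ≤ Real.sqrt s - 1 :=
        Real.log_le_sub_one_of_pos (Real.sqrt_pos.2 hspos)
      nlinarith [Real.sqrt_nonneg s]
    have hAs : A ≤ s / Real.log s := by
      have hsq : Real.sqrt s ^ 2 = s := Real.sq_sqrt hspos.le
      have h6 : s / Real.log s ≥ s / (2 * Real.sqrt s) := by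
        gcongr
      have hsn : 0 < Real.sqrt s := Real.sqrt_pos.2 hspos
      have hms : Real.sqrt s * Real.sqrt s = s := Real.mul_self_sqrt hspos.le
      have h7 : s / (2 * Real.sqrt s) = Real.sqrt s / 2 := by
        field_simp
        linarith [hms]
      linarith [h6, hsqA]
    calc |u s - s| ≤ K * (s / Real.log s) + A := h2
      _ ≤ K * (s / Real.log s) + s / Real.log s := by linarith
      _ = (K + 1) * (s / Real.log s) := by ring
  -- conclusion
  refine ⟨max S₂ (max s₀ 2), le_max_right _ _, 4 * (K + 1), by positivity, ?_⟩
  intro s hs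
  have hsS₂ : S₂ ≤ s := le_trans (le_max_left _ _) hs
  have hsS₁ : S₁ ≤ s := le_trans hS₂S₁ hsS₂
  have hspos : 0 < s := htpos s hsS₁
  have hLs : 2 ≤ Real.log s := hlogS s hsS₁
  have huqs : s / 4 ≤ u s := huq s hsS₁
  have huspos : 0 < u s := hupos s (le_trans hS₁s₀ hsS₁)
  have hbs : b s = (u s)⁻¹ := by
    rw [hu]; simp
  have heq : b s - 1 / s = (s - u s) / (u s * s) := by
    rw [hbs]
    field_simp
  rw [heq, abs_div, abs_of_pos (by positivity : (0:ℝ) < u s * s)]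
  have hnum : |s - u s| ≤ (K + 1) * (s / Real.log s) := by
    rw [abs_sub_comm]; exact hfinal s hsS₂
  have hden : s / 4 * s ≤ u s * s := by
    gcongr
  calc |s - u s| / (u s * s) ≤ ((K + 1) * (s / Real.log s)) / (s / 4 * s) := by
        gcongr
      _ = 4 * (K + 1) / (s * Real.log s) := by
        field_simp

/-- ODE asymptotics for the modulation parameter `b`: if `0 < b < b* < 1` on
`[s₀,∞)` and `|b' + b²| ≤ C b²/|log b|` with `C/|log b*| ≤ 1/2`, then
`s·b(s) → 1`, and more precisely `b(s) = 1/s + O(1/(s log s))`. -/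
theorem b_modulation_asymptotics (C : ℝ) (hC : 0 ≤ C) (s₀ : ℝ) (hs₀ : 1 < s₀)
    (bstar : ℝ) (hbstar : bstar ∈ Set.Ioo (0 : ℝ) 1)
    (hCbstar : C / |Real.log bstar| ≤ 1 / 2)
    (b : ℝ → ℝ)
    (hrange : ∀ s ≥ s₀, b s ∈ Set.Ioo 0 bstar)
    (hC1 : ContDiffOn ℝ 1 b (Set.Ici s₀))
    (hODE : ∀ s ≥ s₀,
      |derivWithin b (Set.Ici s₀) s + (b s) ^ 2|
        ≤ C * (b s) ^ 2 / |Real.log (b s)|) :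
    Tendsto (fun s => s * b s) atTop (𝓝 1) ∧
    ∃ S ≥ s₀, ∃ C' > (0 : ℝ), ∀ s ≥ S,
      |b s - 1 / s| ≤ C' / (s * Real.log s) := by
  obtain ⟨S, hS, C', hC', hbound⟩ :=
    b_modulation_key C hC s₀ hs₀ bstar hbstar hCbstar b hrange hC1 hODE
  have hSs₀ : s₀ ≤ S := le_trans (le_max_left _ _) hS
  have hS2 : (2:ℝ) ≤ S := le_trans (le_max_right _ _) hS
  refine ⟨?_, S, hSs₀, C', hC', hbound⟩
  rw [← tendsto_sub_nhds_zero_iff]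
  apply squeeze_zero_norm' (a := fun s => C' / Real.log s)
  · filter_upwards [eventually_ge_atTop S] with s hs
    have hs2 : (2:ℝ) ≤ s := le_trans hS2 hs
    have hspos : (0:ℝ) < s := by linarith
    have hlog : 0 < Real.log s := Real.log_pos (by linarith)
    have h1 := hbound s hs
    have h2 : s * b s - 1 = s * (b s - 1 / s) := by
      field_simp
    rw [Real.norm_eq_abs, h2, abs_mul, abs_of_pos hspos]
    calc s * |b s - 1 / s| ≤ s * (C' / (s * Real.log s)) := by gcongr
      _ = C' / Real.log s := by
        field_simp
  · exact Tendsto.div_atTop tendsto_const_nhds Real.tendsto_log_atTop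
end

section
/- Let T > 0, c > 0, and let λ : [0,T) → (0,1) be C¹ with λ(t) → 0 as t → T⁻ and λ'(t)·(log λ(t))² → −c as t → T⁻. Then λ(t)·(log(T−t))²/(T−t) → c as t → T⁻. -/
open Filter Topology Real Set

noncomputable def Gfun (x : ℝ) : ℝ := x * (Real.log x)^2 - 2*(x * Real.log x) + 2*x

lemma Gfun_hasDerivAt {x : ℝ} (hx : 0 < x) :
    HasDerivAt Gfun ((Real.log x)^2) x := by
  have hlog : HasDerivAt Real.log x⁻¹ x := Real.hasDerivAt_log hx.ne'
  have h1 : HasDerivAt (fun y => y * (Real.log y)^2)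
      (1 * (Real.log x)^2 + x * (2 * Real.log x ^ 1 * x⁻¹)) x :=
    (hasDerivAt_id x).mul (hlog.pow 2)
  have h2 : HasDerivAt (fun y => y * Real.log y) (1 * Real.log x + x * x⁻¹) x :=
    (hasDerivAt_id x).mul hlog
  have h := (h1.sub (h2.const_mul 2)).add ((hasDerivAt_id x).const_mul 2)
  have : HasDerivAt Gfun
      (1 * (Real.log x)^2 + x * (2 * Real.log x ^ 1 * x⁻¹) -
        2 * (1 * Real.log x + x * x⁻¹) + 2 * 1) x := h
  convert this using 1
  field_simp
  ring

lemma Gfun_tendsto_zero : Tendsto Gfun (𝓝[>] (0:ℝ)) (𝓝 0) := by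
  have h1 : Tendsto (fun x : ℝ => Real.log x * x ^ (1/2 : ℝ)) (𝓝[>] (0:ℝ)) (𝓝 0) :=
    tendsto_log_mul_rpow_nhdsGT_zero (by norm_num)
  have hsq : Tendsto (fun x : ℝ => x * (Real.log x)^2) (𝓝[>] (0:ℝ)) (𝓝 0) := by
    have := h1.mul h1
    rw [mul_zero] at this
    refine this.congr' ?_
    filter_upwards [self_mem_nhdsWithin] with x (hx : 0 < x)
    rw [mul_mul_mul_comm, ← Real.rpow_add hx]
    norm_num
    ring
  have h2 : Tendsto (fun x : ℝ => x * Real.log x) (𝓝[>] (0:ℝ)) (𝓝 0) := by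
    have := tendsto_log_mul_rpow_nhdsGT_zero (r := 1) one_pos
    simp only [Real.rpow_one] at this
    exact this.congr (fun x => mul_comm _ _)
  have h3 : Tendsto (fun x : ℝ => x) (𝓝[>] (0:ℝ)) (𝓝 0) :=
    tendsto_id.mono_left nhdsWithin_le_nhds
  have := (hsq.sub (h2.const_mul 2)).add (h3.const_mul 2)
  unfold Gfun; simpa using this

lemma ratio_tendsto (T c : ℝ) (F F' : ℝ → ℝ)
    (hd : ∀ᶠ t in 𝓝[<] T, HasDerivAt F (F' t) t)
    (hF' : Tendsto F' (𝓝[<] T) (𝓝 (-c)))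
    (hF0 : Tendsto F (𝓝[<] T) (𝓝 0)) :
    Tendsto (fun t => F t / (T - t)) (𝓝[<] T) (𝓝 c) := by
  rw [Metric.tendsto_nhds]
  intro ε hε
  have hb : ∀ᶠ t in 𝓝[<] T, |F' t + c| ≤ ε/2 := by
    have := hF'.eventually (Metric.ball_mem_nhds (-c) (half_pos hε))
    filter_upwards [this] with t ht
    rw [Real.dist_eq, sub_neg_eq_add] at ht
    exact ht.le
  obtain ⟨a, haT, hsub⟩ := mem_nhdsLT_iff_exists_Ioo_subset.mp (hb.and hd)
  have key : ∀ t ∈ Ioo a T, |F t - c * (T - t)| ≤ (ε/2) * (T - t) := by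
    intro t ht
    -- MVT on [t, s] then let s → T⁻
    have hmvt : ∀ s ∈ Ioo t T, |F s + c * s - (F t + c * t)| ≤ (ε/2) * (s - t) := by
      intro s hs
      have hconv : Convex ℝ (Icc t s) := convex_Icc t s
      have hIcc : Icc t s ⊆ Ioo a T := fun y hy =>
        ⟨lt_of_lt_of_le ht.1 hy.1, lt_of_le_of_lt hy.2 hs.2⟩
      have hder : ∀ y ∈ Icc t s, HasDerivWithinAt (fun x => F x + c * x) (F' y + c) (Icc t s) y :=
        fun y hy => by
          have h := (((hsub (hIcc hy)).2).add ((hasDerivAt_id y).const_mul c)).hasDerivWithinAt (s := Icc t s)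
          simp only [mul_one] at h; exact h
      have hbound : ∀ y ∈ Icc t s, ‖F' y + c‖ ≤ ε/2 := fun y hy => (hsub (hIcc hy)).1
      have := hconv.norm_image_sub_le_of_norm_hasDerivWithin_le hder hbound
        (left_mem_Icc.2 (le_of_lt hs.1)) (right_mem_Icc.2 (le_of_lt hs.1))
      rw [Real.norm_eq_abs, Real.norm_eq_abs, abs_of_pos (sub_pos.2 hs.1)] at this
      exact this
    have hne : (𝓝[<] T).NeBot := nhdsLT_neBot T
    have hlim1 : Tendsto (fun s => |F s + c * s - (F t + c * t)|) (𝓝[<] T)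
        (𝓝 |0 + c * T - (F t + c * t)|) := by
      refine (Tendsto.abs ?_)
      exact ((hF0.add (((continuous_const.mul continuous_id).tendsto T).mono_left
        nhdsWithin_le_nhds)).sub tendsto_const_nhds)
    have hlim2 : Tendsto (fun s => (ε/2) * (s - t)) (𝓝[<] T) (𝓝 ((ε/2) * (T - t))) :=
      (((continuous_id.sub continuous_const).tendsto T).mono_left nhdsWithin_le_nhds).const_mul _
    have hev : ∀ᶠ s in 𝓝[<] T, |F s + c * s - (F t + c * t)| ≤ (ε/2) * (s - t) := by
      filter_upwards [Ioo_mem_nhdsLT ht.2] with s hs using hmvt s hs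
    have := le_of_tendsto_of_tendsto hlim1 hlim2 hev
    calc |F t - c * (T - t)| = |0 + c * T - (F t + c * t)| := by rw [abs_sub_comm]; ring_nf
    _ ≤ (ε/2) * (T - t) := this
  filter_upwards [Ioo_mem_nhdsLT haT] with t ht
  have hTt : 0 < T - t := sub_pos.2 ht.2
  rw [Real.dist_eq]
  have heq : F t / (T - t) - c = (F t - c * (T - t)) / (T - t) := by
    field_simp
  rw [heq, abs_div, abs_of_pos hTt]
  calc |F t - c * (T - t)| / (T - t) ≤ ((ε/2) * (T - t)) / (T - t) := by
        gcongr
        exact key t ht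
  _ = ε/2 := mul_div_cancel_right₀ _ hTt.ne'
  _ < ε := half_lt_self hε

lemma log_le_quarter {x : ℝ} (hx : 64 ≤ x) : Real.log x ≤ x / 4 := by
  have hx0 : (0:ℝ) < x := by linarith
  have hs : (8:ℝ) ≤ Real.sqrt x := by
    have : Real.sqrt 64 ≤ Real.sqrt x := Real.sqrt_le_sqrt hx
    rwa [show (64:ℝ) = 8^2 by norm_num, Real.sqrt_sq (by norm_num : (0:ℝ) ≤ 8)] at this
  have hs0 : 0 < Real.sqrt x := by linarith
  have h1 : Real.log x = 2 * Real.log (Real.sqrt x) := (Real.log_sqrt hx0.le).symm ▸ by ring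
  have h2 : Real.log (Real.sqrt x) ≤ Real.sqrt x - 1 :=
    Real.log_le_sub_one_of_pos hs0
  have h3 : Real.sqrt x * Real.sqrt x = x := Real.mul_self_sqrt hx0.le
  nlinarith [h2, hs]

lemma log_lin_div_tendsto (a b : ℝ) (ha : 0 < a) :
    Tendsto (fun x : ℝ => Real.log (a * x + b) / x) atTop (𝓝 0) := by
  have hlin : Tendsto (fun x : ℝ => a * x + b) atTop atTop :=
    (tendsto_id.const_mul_atTop ha).atTop_add tendsto_const_nhds
  have h1 : Tendsto (fun x : ℝ => Real.log (a * x + b) / (a * x + b)) atTop (𝓝 0) :=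
    (Real.isLittleO_log_id_atTop.tendsto_div_nhds_zero).comp hlin
  have h2 : Tendsto (fun x : ℝ => (a * x + b) / x) atTop (𝓝 a) := by
    have : Tendsto (fun x : ℝ => a + b / x) atTop (𝓝 (a + 0)) :=
      tendsto_const_nhds.add (tendsto_const_nhds.div_atTop tendsto_id)
    rw [add_zero] at this
    refine this.congr' ?_
    filter_upwards [eventually_gt_atTop 0] with x hx
    field_simp
  have := h1.mul h2
  rw [zero_mul] at this
  refine this.congr' ?_
  filter_upwards [eventually_gt_atTop 0, hlin.eventually (eventually_gt_atTop 0)] with x hx hax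
  field_simp

/-- Conversion of the differential asymptotics `λ'(t)(log λ(t))² → -c` into the
blow-up rate `λ(t) ∼ c (T-t)/|log(T-t)|²` as `t → T⁻`. -/
theorem blowup_rate_from_derivative (T c : ℝ) (hT : 0 < T) (hc : 0 < c)
    (lam : ℝ → ℝ)
    (hrange : ∀ t ∈ Set.Ico (0 : ℝ) T, lam t ∈ Set.Ioo (0 : ℝ) 1)
    (hC1 : ContDiffOn ℝ 1 lam (Set.Ico 0 T))
    (hlim0 : Tendsto lam (𝓝[<] T) (𝓝 0))
    (hderiv : Tendsto (fun t => deriv lam t * (Real.log (lam t)) ^ 2)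
      (𝓝[<] T) (𝓝 (-c))) :
    Tendsto (fun t => lam t * (Real.log (T - t)) ^ 2 / (T - t))
      (𝓝[<] T) (𝓝 c) := by
  have hne : (𝓝[<] T).NeBot := nhdsLT_neBot T
  have hmem : ∀ᶠ t in 𝓝[<] T, t ∈ Set.Ioo 0 T := Ioo_mem_nhdsLT_of_mem ⟨hT, le_rfl⟩
  have hlamIoo : ∀ᶠ t in 𝓝[<] T, lam t ∈ Set.Ioo (0:ℝ) 1 :=
    hmem.mono fun t ht => hrange t ⟨ht.1.le, ht.2⟩
  have hlam_pos : Tendsto lam (𝓝[<] T) (𝓝[>] 0) :=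
    tendsto_nhdsWithin_iff.2 ⟨hlim0, hlamIoo.mono fun t ht => ht.1⟩
  have hL : Tendsto (fun t => Real.log (lam t)) (𝓝[<] T) atBot :=
    Real.tendsto_log_nhdsGT_zero.comp hlam_pos
  have hTt : Tendsto (fun t => T - t) (𝓝[<] T) (𝓝[>] 0) := by
    refine tendsto_nhdsWithin_iff.2 ⟨?_, ?_⟩
    · have : Tendsto (fun t => T - t) (𝓝 T) (𝓝 (T - T)) :=
        (continuous_const.sub continuous_id).tendsto T
      rw [sub_self] at this
      exact this.mono_left nhdsWithin_le_nhds
    · filter_upwards [self_mem_nhdsWithin] with t (ht : t < T)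
      exact sub_pos.2 ht
  have hM : Tendsto (fun t => Real.log (T - t)) (𝓝[<] T) atBot :=
    Real.tendsto_log_nhdsGT_zero.comp hTt
  -- Step 1: F(t)/(T-t) → c where F = Gfun ∘ lam
  have hdF : ∀ᶠ t in 𝓝[<] T,
      HasDerivAt (fun t => Gfun (lam t)) (deriv lam t * (Real.log (lam t))^2) t := by
    filter_upwards [hmem] with t ht
    have hlt : lam t ∈ Set.Ioo (0:ℝ) 1 := hrange t ⟨ht.1.le, ht.2⟩
    have hdiff : DifferentiableAt ℝ lam t := by
      have h1 := (hC1.differentiableOn (by norm_num)) t ⟨ht.1.le, ht.2⟩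
      exact h1.differentiableAt
        (mem_of_superset (Ioo_mem_nhds ht.1 ht.2) Set.Ioo_subset_Ico_self)
    have := (Gfun_hasDerivAt hlt.1).comp t hdiff.hasDerivAt
    rw [show (fun t => Gfun (lam t)) = Gfun ∘ lam from rfl, mul_comm]; exact this
  have hF0 : Tendsto (fun t => Gfun (lam t)) (𝓝[<] T) (𝓝 0) :=
    Gfun_tendsto_zero.comp hlam_pos
  have hFr : Tendsto (fun t => Gfun (lam t) / (T - t)) (𝓝[<] T) (𝓝 c) :=
    ratio_tendsto T c _ _ hdF hderiv hF0
  -- Step 2: lam t * L² / (T - t) → c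
  have hLtop : Tendsto (fun t => -Real.log (lam t)) (𝓝[<] T) atTop :=
    tendsto_neg_atBot_atTop.comp hL
  have hinv : Tendsto (fun t => (Real.log (lam t))⁻¹) (𝓝[<] T) (𝓝 0) := by
    have h1 := hLtop.inv_tendsto_atTop
    have h2 := h1.neg
    rw [neg_zero] at h2
    refine h2.congr fun t => ?_
    simp [inv_neg]
  have hD : Tendsto (fun t => 1 - 2*(Real.log (lam t))⁻¹ + 2*((Real.log (lam t))⁻¹)^2)
      (𝓝[<] T) (𝓝 1) := by
    have := (tendsto_const_nhds (x := (1:ℝ)).sub (hinv.const_mul 2)).add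
      ((hinv.pow 2).const_mul 2)
    simpa using this
  have hA : Tendsto (fun t => lam t * (Real.log (lam t))^2 / (T - t)) (𝓝[<] T) (𝓝 c) := by
    have hdiv := hFr.div hD one_ne_zero
    rw [div_one] at hdiv
    refine hdiv.congr' ?_
    filter_upwards [hlamIoo, hL.eventually (eventually_le_atBot (-1)),
      hmem, hD.eventually_ne one_ne_zero] with t hlt hL1 htm hD0
    have hL0 : Real.log (lam t) ≠ 0 := by linarith [hL1]
    have hG : Gfun (lam t) = lam t * (Real.log (lam t))^2 *
        (1 - 2*(Real.log (lam t))⁻¹ + 2*((Real.log (lam t))⁻¹)^2) := by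
      unfold Gfun; field_simp
    simp only [Pi.div_apply]
    rw [hG, div_right_comm, mul_div_cancel_right₀ _ hD0]
  -- Step 3: log(lam t) / log(T - t) → 1
  set K : ℝ := |Real.log c| + 1 with hKdef
  have hKpos : 0 < K := by positivity
  have hlogA : Tendsto (fun t => Real.log (lam t * (Real.log (lam t))^2 / (T - t)))
      (𝓝[<] T) (𝓝 (Real.log c)) := (Real.continuousAt_log hc.ne').tendsto.comp hA
  have hEeq : ∀ᶠ t in 𝓝[<] T,
      Real.log (lam t * (Real.log (lam t))^2 / (T - t))
        = Real.log (lam t) + 2 * Real.log (-(Real.log (lam t))) - Real.log (T - t) := by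
    filter_upwards [hlamIoo, hL.eventually (eventually_le_atBot (-1)), hmem]
      with t hlt hL1 htm
    have hlp : lam t ≠ 0 := hlt.1.ne'
    have hL0 : Real.log (lam t) ≠ 0 := by linarith
    have hTt0 : T - t ≠ 0 := (sub_pos.2 htm.2).ne'
    rw [Real.log_div (mul_ne_zero hlp (pow_ne_zero 2 hL0)) hTt0,
      Real.log_mul hlp (pow_ne_zero 2 hL0), Real.log_pow,
      ← Real.log_neg_eq_log (Real.log (lam t))]
    push_cast
    ring
  have hE : Tendsto (fun t => Real.log (lam t) + 2 * Real.log (-(Real.log (lam t)))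
      - Real.log (T - t)) (𝓝[<] T) (𝓝 (Real.log c)) := hlogA.congr' hEeq
  have hK : ∀ᶠ t in 𝓝[<] T,
      |Real.log (lam t) + 2 * Real.log (-(Real.log (lam t))) - Real.log (T - t)| ≤ K := by
    have := hE.eventually (Metric.ball_mem_nhds (Real.log c) one_pos)
    filter_upwards [this] with t ht
    rw [Real.dist_eq] at ht
    have := abs_sub_abs_le_abs_sub (Real.log (lam t) + 2 * Real.log (-(Real.log (lam t)))
      - Real.log (T - t)) (Real.log c)
    rw [hKdef]; linarith
  have h64 : ∀ᶠ t in 𝓝[<] T, Real.log (lam t) ≤ -64 :=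
    hL.eventually (eventually_le_atBot (-64))
  have hMneg : ∀ᶠ t in 𝓝[<] T, Real.log (T - t) ≤ -1 :=
    hM.eventually (eventually_le_atBot (-1))
  have hbound : ∀ᶠ t in 𝓝[<] T,
      -(Real.log (lam t)) ≤ 2 * (-(Real.log (T - t))) + 2 * K := by
    filter_upwards [hK, h64] with t hKt h64t
    set L := Real.log (lam t)
    set M := Real.log (T - t)
    have h1 : Real.log (-L) ≤ (-L) / 4 := log_le_quarter (by linarith)
    have h2 : -(L + 2 * Real.log (-L) - M) ≤ K := by
      have := (abs_le.1 hKt).1; linarith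
    linarith
  have hMtop : Tendsto (fun t => -(Real.log (T - t))) (𝓝[<] T) atTop :=
    tendsto_neg_atBot_atTop.comp hM
  have hlog2 : Tendsto (fun t => Real.log (2 * (-(Real.log (T - t))) + 2 * K)
      / (-(Real.log (T - t)))) (𝓝[<] T) (𝓝 0) :=
    (log_lin_div_tendsto 2 (2 * K) two_pos).comp hMtop
  have hKdiv : Tendsto (fun t => K / (-(Real.log (T - t)))) (𝓝[<] T) (𝓝 0) :=
    tendsto_const_nhds.div_atTop hMtop
  have hdiff0 : Tendsto (fun t => (Real.log (lam t) - Real.log (T - t)) / Real.log (T - t))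
      (𝓝[<] T) (𝓝 0) := by
    have hg : Tendsto (fun t => 2 * (Real.log (2 * (-(Real.log (T - t))) + 2 * K)
        / (-(Real.log (T - t)))) + K / (-(Real.log (T - t)))) (𝓝[<] T) (𝓝 0) := by
      have := (hlog2.const_mul 2).add hKdiv
      simpa using this
    refine squeeze_zero_norm' ?_ hg
    filter_upwards [hK, h64, hMneg, hbound] with t hKt h64t hMt hbt
    set L := Real.log (lam t)
    set M := Real.log (T - t)
    have hMpos : 0 < -M := by linarith
    have hLpos : 0 < -L := by linarith
    have hlogL_nonneg : 0 ≤ Real.log (-L) := Real.log_nonneg (by linarith)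
    have hlogle : Real.log (-L) ≤ Real.log (2 * (-M) + 2 * K) :=
      Real.log_le_log hLpos hbt
    have habs : |L - M| ≤ 2 * Real.log (2 * (-M) + 2 * K) + K := by
      have h1 : |L - M| ≤ |L + 2 * Real.log (-L) - M| + 2 * Real.log (-L) := by
        have := abs_sub (L + 2 * Real.log (-L) - M) (2 * Real.log (-L))
        calc |L - M| = |(L + 2 * Real.log (-L) - M) - 2 * Real.log (-L)| := by ring_nf
        _ ≤ |L + 2 * Real.log (-L) - M| + |2 * Real.log (-L)| := abs_sub _ _
        _ = |L + 2 * Real.log (-L) - M| + 2 * Real.log (-L) := by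
            rw [abs_of_nonneg (by linarith : (0:ℝ) ≤ 2 * Real.log (-L))]
      linarith
    rw [Real.norm_eq_abs, abs_div, abs_of_neg (by linarith : M < 0)]
    calc |L - M| / (-M) ≤ (2 * Real.log (2 * (-M) + 2 * K) + K) / (-M) := by
          gcongr
    _ = 2 * (Real.log (2 * (-M) + 2 * K) / (-M)) + K / (-M) := by ring
  have hLM : Tendsto (fun t => Real.log (lam t) / Real.log (T - t)) (𝓝[<] T) (𝓝 1) := by
    have h1 : Tendsto (fun t => 1 + (Real.log (lam t) - Real.log (T - t)) / Real.log (T - t))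
        (𝓝[<] T) (𝓝 (1 + 0)) := tendsto_const_nhds.add hdiff0
    rw [add_zero] at h1
    refine h1.congr' ?_
    filter_upwards [hMneg] with t hMt
    have hM0 : Real.log (T - t) ≠ 0 := by linarith
    field_simp
    ring
  -- Step 4: conclude
  have hML : Tendsto (fun t => Real.log (T - t) / Real.log (lam t)) (𝓝[<] T) (𝓝 1) := by
    have := hLM.inv₀ one_ne_zero
    rw [inv_one] at this
    refine this.congr fun t => ?_
    simp [inv_div]
  have hfin := hA.mul (hML.mul hML)
  have : c * (1 * 1) = c := by ring
  rw [this] at hfin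
  refine hfin.congr' ?_
  filter_upwards [hlamIoo, hL.eventually (eventually_le_atBot (-1)), hmem] with t hlt hL1 htm
  have hL0 : Real.log (lam t) ≠ 0 := by linarith
  have hTt0 : T - t ≠ 0 := (sub_pos.2 htm.2).ne'
  field_simp
end
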